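/- Over the polar triangle family Q₁Q₂Q₃ (polar of parabola-inscribed Poncelet triangles with respect to the parabola), the barycenter (Q₁+Q₂+Q₃)/3 has constant x-coordinate equal to (2√2 − 1)f/3; that is, the barycenter sweeps a line parallel to the directrix. -/

import Mathlib

private lemma polar_barycenter_key (f y₁ Δ s : ℝ) (hs : s ^ 2 = 2)
    (hden₁ : 2 * (2 * s + 3) * y₁ ^ 2 - 8 * f ^ 2 ≠ 0)
    (hden₃ : (3 + 2 * s) * y₁ ^ 2 - 4 * f ^ 2 ≠ 0) :
    ((1 + s) * ((4 * f * y₁ + Δ) * y₁ / (2 * (2 * s + 3) * y₁ ^ 2 - 8 * f ^ 2)) +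
     (1 + s) * ((4 * f * y₁ - Δ) * y₁ / (2 * (2 * s + 3) * y₁ ^ 2 - 8 * f ^ 2)) +
     (1 + s) * ((5 - 3 * s) * ((1 + 2 * s) * y₁ ^ 2 - 28 * f ^ 2) * f /
        (7 * ((3 + 2 * s) * y₁ ^ 2 - 4 * f ^ 2)))) / 3 = (2 * s - 1) * f / 3 := by
  field_simp
  have h1 : y₁ ^ 2 * 2 * (s * 2 + 3) - f ^ 2 * 8 ≠ 0 := by
    intro h; exact hden₁ (by linear_combination h)
  have h3 : y₁ ^ 2 * (3 + s * 2) - 4 * f ^ 2 ≠ 0 := by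
    intro h; exact hden₃ (by linear_combination h)
  rw [div_add_div _ _ h1 h3, mul_div_assoc', div_eq_iff (mul_ne_zero h1 h3)]
  linear_combination (f * y₁ ^ 4 * (-24 * s ^ 2 - 144 * s - 162) +
    f ^ 3 * y₁ ^ 2 * (384 * s + 720) - 672 * f ^ 5) * hs

/-- Over the polar triangle family `Q₁Q₂Q₃`, the barycenter has constant abscissa
`(2√2 − 1)f/3`: it sweeps a line parallel to the directrix. -/
theorem polar_barycenter_line (f y₁ Δ : ℝ) (hf : 0 < f) (Q₁ Q₂ Q₃ : ℝ × ℝ)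
    (hΔ : Δ = Real.sqrt (y₁ ^ 4 + 8 * f ^ 2 * y₁ ^ 2 + 16 * (8 * Real.sqrt 2 - 11) * f ^ 4))
    (hden₁ : 2 * (2 * Real.sqrt 2 + 3) * y₁ ^ 2 - 8 * f ^ 2 ≠ 0)
    (hden₃ : (3 + 2 * Real.sqrt 2) * y₁ ^ 2 - 4 * f ^ 2 ≠ 0)
    (hQ₁ : Q₁ = ((1 + Real.sqrt 2) * ((4 * f * y₁ + Δ) * y₁ /
        (2 * (2 * Real.sqrt 2 + 3) * y₁ ^ 2 - 8 * f ^ 2)),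
      (1 + Real.sqrt 2) * (((1 + Real.sqrt 2) * y₁ ^ 3 - 4 * (1 + Real.sqrt 2) * f ^ 2 * y₁ -
        2 * Δ * f) / (2 * (2 * Real.sqrt 2 + 3) * y₁ ^ 2 - 8 * f ^ 2))))
    (hQ₂ : Q₂ = ((1 + Real.sqrt 2) * ((4 * f * y₁ - Δ) * y₁ /
        (2 * (2 * Real.sqrt 2 + 3) * y₁ ^ 2 - 8 * f ^ 2)),
      (1 + Real.sqrt 2) * (((1 + Real.sqrt 2) * y₁ ^ 3 - 4 * (1 + Real.sqrt 2) * f ^ 2 * y₁ +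
        2 * Δ * f) / (2 * (2 * Real.sqrt 2 + 3) * y₁ ^ 2 - 8 * f ^ 2))))
    (hQ₃ : Q₃ = ((1 + Real.sqrt 2) * ((5 - 3 * Real.sqrt 2) *
        ((1 + 2 * Real.sqrt 2) * y₁ ^ 2 - 28 * f ^ 2) * f /
        (7 * ((3 + 2 * Real.sqrt 2) * y₁ ^ 2 - 4 * f ^ 2))),
      (1 + Real.sqrt 2) * (-(8 * f ^ 2 * y₁) /
        ((3 + 2 * Real.sqrt 2) * y₁ ^ 2 - 4 * f ^ 2)))) :
    (Q₁.1 + Q₂.1 + Q₃.1) / 3 = (2 * Real.sqrt 2 - 1) * f / 3 := by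
  subst hQ₁ hQ₂ hQ₃
  exact polar_barycenter_key f y₁ Δ (Real.sqrt 2) (Real.sq_sqrt (by norm_num)) hden₁ hden₃
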